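/- The identity sum_{k=0}^{l} binom(l,k)^2 / binom(2l, 2k) = 4^l / binom(2l, l) holds for every nonnegative integer l. -/

import Mathlib

open Finset Nat

noncomputable def c (k : ℕ) : ℝ := (Nat.centralBinom k : ℝ)

lemma c_succ (j : ℕ) : ((j:ℝ) + 1) * c (j+1) = 2 * (2*(j:ℝ)+1) * c j := by
  have h := Nat.succ_mul_centralBinom_succ j
  have h' : (((j+1) * Nat.centralBinom (j+1) : ℕ) : ℝ)
      = ((2 * (2*j+1) * Nat.centralBinom j : ℕ) : ℝ) := by exact_mod_cast h
  push_cast at h'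
  simpa [c] using h'

lemma sym (n : ℕ) (w : ℕ → ℝ) :
    ∑ k ∈ range (n+1), w k * c k * c (n-k) = ∑ k ∈ range (n+1), w (n-k) * c k * c (n-k) := by
  rw [← Finset.sum_range_reflect (fun k => w (n-k) * c k * c (n-k)) (n+1)]
  apply Finset.sum_congr rfl
  intro k hk
  simp only [Finset.mem_range] at hk
  have hk' : k ≤ n := by omega
  simp only [Nat.add_sub_cancel]
  have h1 : n - (n - k) = k := by omega
  rw [h1]
  ring

lemma conv (n : ℕ) : ∑ k ∈ range (n+1), c k * c (n-k) = 4 ^ n := by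
  induction n with
  | zero => simp [c, Nat.centralBinom]
  | succ n ih =>
    set f : ℝ := ∑ k ∈ range (n+1+1), c k * c (n+1-k) with hf
    have hA : ∑ k ∈ range (n+1+1), (k:ℝ) * c k * c (n+1-k) = ((n:ℝ)+1) / 2 * f := by
      have hs := sym (n+1) (fun k => (k:ℝ))
      have h2 : 2 * (∑ k ∈ range (n+1+1), (k:ℝ) * c k * c (n+1-k))
          = ∑ k ∈ range (n+1+1), ((k:ℝ) + ((n+1-k : ℕ):ℝ)) * c k * c (n+1-k) := by
        rw [two_mul]
        nth_rewrite 2 [hs]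
        rw [← Finset.sum_add_distrib]
        apply Finset.sum_congr rfl; intro k hk; ring
      have h3 : ∑ k ∈ range (n+1+1), ((k:ℝ) + ((n+1-k : ℕ):ℝ)) * c k * c (n+1-k)
          = ((n:ℝ)+1) * f := by
        rw [hf, Finset.mul_sum]
        apply Finset.sum_congr rfl; intro k hk
        simp only [Finset.mem_range] at hk
        have hc : ((n+1-k : ℕ):ℝ) = (n:ℝ)+1-(k:ℝ) := by
          have hk2 : k ≤ n+1 := by omega
          push_cast [hk2]; ring
        rw [hc]; ring
      linarith [h2, h3.symm]
    have hB : ∑ k ∈ range (n+1+1), (k:ℝ) * c k * c (n+1-k)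
        = ∑ j ∈ range (n+1), ((j:ℝ)+1) * c (j+1) * c (n-j) := by
      rw [Finset.sum_range_succ' (fun k => (k:ℝ) * c k * c (n+1-k)) (n+1)]
      simp only [Nat.cast_zero, zero_mul, add_zero]
      apply Finset.sum_congr rfl; intro j hj
      have hj2 : n + 1 - (j+1) = n - j := by omega
      rw [hj2]; push_cast; ring
    have hC : ∑ j ∈ range (n+1), ((j:ℝ)+1) * c (j+1) * c (n-j)
        = 2 * ((n:ℝ)+1) * (∑ k ∈ range (n+1), c k * c (n-k)) := by
      have h4 : ∀ j ∈ range (n+1), ((j:ℝ)+1) * c (j+1) * c (n-j)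
          = 2 * ((2*(j:ℝ)+1) * c j * c (n-j)) := by
        intro j _
        rw [show ((j:ℝ)+1) * c (j+1) * c (n-j) = (((j:ℝ)+1) * c (j+1)) * c (n-j) from by ring,
          c_succ j]
        ring
      rw [Finset.sum_congr rfl h4, ← Finset.mul_sum]
      have hs := sym n (fun k => 2*(k:ℝ)+1)
      have h6 : 2 * (∑ j ∈ range (n+1), (2*(j:ℝ)+1) * c j * c (n-j))
          = ∑ j ∈ range (n+1), (2*((j:ℝ) + ((n-j:ℕ):ℝ))+2) * c j * c (n-j) := by
        rw [two_mul]
        nth_rewrite 2 [hs]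
        rw [← Finset.sum_add_distrib]
        apply Finset.sum_congr rfl; intro j hj; ring
      have h7 : ∑ j ∈ range (n+1), (2*((j:ℝ) + ((n-j:ℕ):ℝ))+2) * c j * c (n-j)
          = (2*(n:ℝ)+2) * ∑ j ∈ range (n+1), c j * c (n-j) := by
        rw [Finset.mul_sum]
        apply Finset.sum_congr rfl; intro j hj
        simp only [Finset.mem_range] at hj
        have hc : ((n-j : ℕ):ℝ) = (n:ℝ)-(j:ℝ) := by
          have hj2 : j ≤ n := by omega
          push_cast [hj2]; ring
        rw [hc]; ring
      linarith [h6, h7]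
    rw [ih] at hC
    have hkey : ((n:ℝ)+1)/2 * f = 2 * ((n:ℝ)+1) * 4 ^ n := by rw [← hA, hB, hC]
    have hne : ((n:ℝ)+1) ≠ 0 := by positivity
    have hfval : f = 4 * 4 ^ n := by
      field_simp at hkey
      nlinarith [hkey, pow_pos (show (0:ℝ) < 4 by norm_num) n]
    rw [hfval]; ring

/-- `∑_{k=0}^{l} binom(l,k)^2 / binom(2l,2k) = 4^l / binom(2l,l)`. -/
theorem sum_sq_choose_div_choose (l : ℕ) :
    ∑ k ∈ Finset.range (l + 1), ((l.choose k : ℝ) ^ 2 / ((2 * l).choose (2 * k) : ℝ))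
      = (4 : ℝ) ^ l / ((2 * l).choose l : ℝ) := by
  have hterm : ∀ k ∈ Finset.range (l+1),
      ((l.choose k : ℝ) ^ 2 / ((2 * l).choose (2 * k) : ℝ))
        = c k * c (l-k) / ((2*l).choose l : ℝ) := by
    intro k hk
    simp only [Finset.mem_range] at hk
    have hkl : k ≤ l := by omega
    have h1 : 2*k ≤ 2*l := by omega
    have h2 : l ≤ 2*l := by omega
    have h3 : k ≤ 2*k := by omega
    have h4 : l - k ≤ 2*(l-k) := by omega
    rw [Nat.cast_choose ℝ hkl, Nat.cast_choose ℝ h1, Nat.cast_choose ℝ h2]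
    simp only [c, Nat.centralBinom]
    rw [Nat.cast_choose ℝ h3, Nat.cast_choose ℝ h4]
    have e1 : 2*k - k = k := by omega
    have e2 : 2*(l-k) - (l-k) = l - k := by omega
    have e3 : 2*l - 2*k = 2*(l-k) := by omega
    have e4 : 2*l - l = l := by omega
    rw [e1, e2, e3, e4]
    have p1 : (0:ℝ) < (k ! : ℝ) := by exact_mod_cast Nat.factorial_pos k
    have p2 : (0:ℝ) < ((l-k)! : ℝ) := by exact_mod_cast Nat.factorial_pos (l-k)
    have p3 : (0:ℝ) < ((2*k)! : ℝ) := by exact_mod_cast Nat.factorial_pos (2*k)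
    have p4 : (0:ℝ) < ((2*(l-k))! : ℝ) := by exact_mod_cast Nat.factorial_pos (2*(l-k))
    have p5 : (0:ℝ) < ((2*l)! : ℝ) := by exact_mod_cast Nat.factorial_pos (2*l)
    have p6 : (0:ℝ) < (l ! : ℝ) := by exact_mod_cast Nat.factorial_pos l
    field_simp
  rw [Finset.sum_congr rfl hterm, ← Finset.sum_div, conv l]
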